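/- arXiv:0807.1267 — 5 statements merged into one kernel-verified Lean document; each statement's English description precedes it below -/
import Mathlib

section
/- Let n be a positive integer, let σ be a Hermitian positive definite n×n complex matrix, and let φ ∈ ℂⁿ be a unit vector with associated rank-one matrix ρ = |φ⟩⟨φ|. Then the set of real numbers k such that σ − k·ρ is positive semidefinite has a greatest element, namely k₀ = (⟨φ, σ⁻¹ φ⟩)⁻¹. That is: σ − k₀·ρ is positive semidefinite, and for every real k, if σ − k·ρ is positive semidefinite then k ≤ k₀. -/
open Matrix
open scoped ComplexOrder

private lemma cs_aux {n : ℕ} {σ : Matrix (Fin n) (Fin n) ℂ} (hσ : σ.PosDef) (x v : Fin n → ℂ) :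
    ‖star x ⬝ᵥ σ *ᵥ v‖ * ‖star v ⬝ᵥ σ *ᵥ x‖ ≤ (star x ⬝ᵥ σ *ᵥ x).re * (star v ⬝ᵥ σ *ᵥ v).re :=
  by
    have h := @inner_mul_inner_self_le ℂ (Fin n → ℂ) _
      (σ.toSeminormedAddCommGroup hσ.posSemidef)
      (σ.toInnerProductSpace hσ.posSemidef) x v
    change ‖(σ *ᵥ v) ⬝ᵥ star x‖ * ‖(σ *ᵥ x) ⬝ᵥ star v‖
      ≤ ((σ *ᵥ x) ⬝ᵥ star x).re * ((σ *ᵥ v) ⬝ᵥ star v).re at h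
    rw [dotProduct_comm (σ *ᵥ v) (star x), dotProduct_comm (σ *ᵥ x) (star v),
      dotProduct_comm (σ *ᵥ x) (star x), dotProduct_comm (σ *ᵥ v) (star v)] at h
    exact h

/-- For a Hermitian positive definite `σ` and a unit vector `φ` with
`ρ = |φ⟩⟨φ|`, the set of reals `k` with `σ - k • ρ` positive semidefinite has greatest
element `k₀ = (⟨φ, σ⁻¹ φ⟩)⁻¹`. -/
theorem stmt_0 {n : ℕ} (hn : 0 < n) (σ : Matrix (Fin n) (Fin n) ℂ)
    (hσ : σ.PosDef) (φ : Fin n → ℂ) (hφ : ∑ i, ‖φ i‖ ^ 2 = 1) :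
    IsGreatest {k : ℝ | (σ - (k : ℂ) • Matrix.vecMulVec φ (star φ)).PosSemidef}
      (((star φ ⬝ᵥ σ⁻¹ *ᵥ φ).re)⁻¹) := by
  classical
  have hφ0 : φ ≠ 0 := by
    intro h
    rw [h] at hφ
    simp at hφ
  set c : ℂ := star φ ⬝ᵥ σ⁻¹ *ᵥ φ with hcdef
  have hcpos : (0 : ℂ) < c := hσ.inv.dotProduct_mulVec_pos hφ0
  have hcre : 0 < c.re := (Complex.lt_def.mp hcpos).1
  have hcim : c.im = 0 := ((Complex.lt_def.mp hcpos).2).symm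
  have hUnitDet : IsUnit σ.det := (Matrix.isUnit_iff_isUnit_det σ).mp hσ.isUnit
  have key : ∀ u : Fin n → ℂ, star (σ⁻¹ *ᵥ φ) ⬝ᵥ σ *ᵥ u = star φ ⬝ᵥ u := by
    intro u
    rw [star_mulVec, hσ.inv.1.eq, dotProduct_mulVec, vecMul_vecMul,
      Matrix.nonsing_inv_mul σ hUnitDet, vecMul_one]
  have hρ : (Matrix.vecMulVec φ (star φ)).IsHermitian := by
    show _ᴴ = _
    ext i j
    simp [conjTranspose_apply, vecMulVec_apply, mul_comm]
  have hherm : ∀ k : ℝ, (σ - (k : ℂ) • Matrix.vecMulVec φ (star φ)).IsHermitian := by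
    intro k
    apply hσ.1.sub
    show _ᴴ = _
    rw [conjTranspose_smul, hρ.eq, Complex.star_def, Complex.conj_ofReal]
  have hquad : ∀ (k : ℝ) (v : Fin n → ℂ),
      star v ⬝ᵥ (σ - (k : ℂ) • Matrix.vecMulVec φ (star φ)) *ᵥ v
        = star v ⬝ᵥ σ *ᵥ v - (k : ℂ) * ((‖star φ ⬝ᵥ v‖ : ℝ) ^ 2 : ℝ) := by
    intro k v
    rw [sub_mulVec, dotProduct_sub, smul_mulVec, dotProduct_smul]
    congr 1
    rw [smul_eq_mul]
    congr 1
    have h1 : (Matrix.vecMulVec φ (star φ)) *ᵥ v = (star φ ⬝ᵥ v) • φ := by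
      ext i
      simp only [mulVec, vecMulVec_apply, dotProduct, Pi.smul_apply, smul_eq_mul,
        Finset.sum_mul]
      exact Finset.sum_congr rfl fun x _ => by ring
    have h2 : star v ⬝ᵥ φ = (starRingEnd ℂ) (star φ ⬝ᵥ v) := by
      simp [dotProduct, map_sum, mul_comm]
    rw [h1, dotProduct_smul, smul_eq_mul, h2,
      mul_comm ((star φ ⬝ᵥ v)) ((starRingEnd ℂ) (star φ ⬝ᵥ v)), Complex.conj_mul', Complex.ofReal_pow]
  constructor
  · -- membership
    refine PosSemidef.of_dotProduct_mulVec_nonneg (hherm _) fun v => ?_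
    rw [hquad]
    have hz := hσ.posSemidef.dotProduct_mulVec_nonneg v
    have hzre : 0 ≤ (star v ⬝ᵥ σ *ᵥ v).re := (Complex.nonneg_iff.mp hz).1
    have hzim : 0 = (star v ⬝ᵥ σ *ᵥ v).im := (Complex.nonneg_iff.mp hz).2
    have cs := cs_aux hσ (σ⁻¹ *ᵥ φ) v
    rw [key v, key (σ⁻¹ *ᵥ φ)] at cs
    have hswap : star v ⬝ᵥ σ *ᵥ (σ⁻¹ *ᵥ φ) = (starRingEnd ℂ) (star φ ⬝ᵥ v) := by
      rw [mulVec_mulVec, Matrix.mul_nonsing_inv σ hUnitDet, one_mulVec]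
      simp [dotProduct, mul_comm]
    rw [hswap] at cs
    simp only [RCLike.norm_conj] at cs
    rw [Complex.nonneg_iff]
    constructor
    · simp only [Complex.sub_re, ← Complex.ofReal_mul, Complex.ofReal_re]
      rw [sub_nonneg, inv_mul_le_iff₀ hcre, sq]
      exact cs
    · simp only [Complex.sub_im, ← Complex.ofReal_mul, Complex.ofReal_im, ← hzim, sub_zero]
  · -- upper bound
    intro k hk
    have h := hk.dotProduct_mulVec_nonneg (σ⁻¹ *ᵥ φ)
    rw [hquad, key (σ⁻¹ *ᵥ φ)] at h
    have hnc : ‖star φ ⬝ᵥ σ⁻¹ *ᵥ φ‖ = c.re := by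
      rw [← hcdef, Complex.norm_def, Complex.normSq_apply, hcim]
      simp [Real.sqrt_mul_self hcre.le]
    rw [hnc] at h
    have hre := (Complex.nonneg_iff.mp h).1
    simp only [Complex.sub_re, ← Complex.ofReal_mul, Complex.ofReal_re] at hre
    have h1 : k * c.re ≤ 1 := by nlinarith [hcre, hre]
    calc k = k * c.re * c.re⁻¹ := by field_simp
      _ ≤ 1 * c.re⁻¹ := mul_le_mul_of_nonneg_right h1 (by positivity)
      _ = c.re⁻¹ := one_mul _
end

section
/- Let X be a finite set and let P and Q be probability distributions on X with Q(x) > 0 for all x ∈ X. Then for every subset X' ⊆ X, ∑_{x∈X'} P(x)·log₂(P(x)/Q(x)) ≥ −(log₂ e)/e; in particular this sum is strictly greater than −1. (Terms with P(x) = 0 contribute 0 to the sum.) -/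
lemma pointwise_bound (p q : ℝ) (hp : 0 ≤ p) (hq : 0 < q) :
    -(q / Real.exp 1) ≤ p * Real.log (p / q) := by
  have hE : 0 < Real.exp 1 := Real.exp_pos 1
  have hqE : 0 ≤ q / Real.exp 1 := by positivity
  rcases eq_or_lt_of_le hp with h | hp
  · rw [← h]; simp; linarith
  · set t := p / q with ht
    have htpos : 0 < t := div_pos hp hq
    have key := Real.add_one_le_exp (-(Real.log t) - 1)
    have hexp : Real.exp (-(Real.log t) - 1) = 1 / (t * Real.exp 1) := by
      rw [sub_eq_add_neg, Real.exp_add, Real.exp_neg, Real.exp_log htpos, Real.exp_neg]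
      field_simp
    rw [hexp] at key
    have hkey : -(Real.log t) ≤ 1 / (t * Real.exp 1) := by linarith
    have h1 : -(p * Real.log t) ≤ p / (t * Real.exp 1) := by
      have := mul_le_mul_of_nonneg_left hkey (le_of_lt hp)
      calc -(p * Real.log t) = p * (-(Real.log t)) := by ring
        _ ≤ p * (1 / (t * Real.exp 1)) := this
        _ = p / (t * Real.exp 1) := by ring
    have hpt : p / t = q := by rw [ht]; field_simp
    have h2 : p / (t * Real.exp 1) = q / Real.exp 1 := by
      rw [div_mul_eq_div_div, hpt]
    linarith [h1, h2.le]

/-- For probability distributions `P`, `Q` on a finite set with `Q`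
everywhere positive, and any subset `X'`,
`∑_{x∈X'} P(x)·log₂(P(x)/Q(x)) ≥ −(log₂ e)/e > −1`. -/
theorem stmt_2 {X : Type*} [Fintype X] (P Q : X → ℝ)
    (hP0 : ∀ x, 0 ≤ P x) (hP1 : ∑ x, P x = 1)
    (hQ0 : ∀ x, 0 < Q x) (hQ1 : ∑ x, Q x = 1)
    (X' : Finset X) :
    -(Real.logb 2 (Real.exp 1)) / Real.exp 1 ≤ ∑ x ∈ X', P x * Real.logb 2 (P x / Q x) ∧
    -1 < ∑ x ∈ X', P x * Real.logb 2 (P x / Q x) := by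
  have hlog2 : 0 < Real.log 2 := Real.log_pos one_lt_two
  have hE : 0 < Real.exp 1 := Real.exp_pos 1
  have hsumQ : ∑ x ∈ X', Q x ≤ 1 := by
    rw [← hQ1]
    exact Finset.sum_le_sum_of_subset_of_nonneg (Finset.subset_univ X')
      (fun x _ _ => (hQ0 x).le)
  have hrw : ∑ x ∈ X', P x * Real.logb 2 (P x / Q x)
      = (∑ x ∈ X', P x * Real.log (P x / Q x)) / Real.log 2 := by
    rw [Finset.sum_div]
    refine Finset.sum_congr rfl fun x _ => ?_
    rw [Real.logb, mul_div_assoc]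
  have hsum : -(1 / Real.exp 1) ≤ ∑ x ∈ X', P x * Real.log (P x / Q x) := by
    have h2 := Finset.sum_le_sum
      (fun x (_ : x ∈ X') => pointwise_bound (P x) (Q x) (hP0 x) (hQ0 x))
    have h3 : ∑ x ∈ X', -(Q x / Real.exp 1) = -((∑ x ∈ X', Q x) / Real.exp 1) := by
      simp [Finset.sum_div, neg_div]
    have h4 : (∑ x ∈ X', Q x) / Real.exp 1 ≤ 1 / Real.exp 1 := by gcongr
    linarith [h2, h3.symm.le]
  have hlt : 1 / Real.exp 1 < Real.log 2 := by
    rw [div_lt_iff₀ hE]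
    nlinarith [Real.exp_one_gt_d9, Real.log_two_gt_d9]
  constructor
  · rw [hrw, Real.logb, Real.log_exp]
    have heq : -(1 / Real.log 2) / Real.exp 1 = -(1 / Real.exp 1) / Real.log 2 := by
      field_simp
    rw [heq]
    gcongr
  · rw [hrw, lt_div_iff₀ hlog2]
    calc (-1 : ℝ) * Real.log 2 = -(Real.log 2) := by ring
      _ < -(1 / Real.exp 1) := by linarith
      _ ≤ _ := hsum
end

section
/- Let δ > 0, let X be a finite set, and let P and Q be probability distributions on X with Q(x) > 0 for all x ∈ X. Suppose the relative entropy satisfies S(P‖Q) ≤ c. Then there exists a subset Good ⊆ X such that ∑_{x∈Good} P(x) ≥ 1 − δ, and for every x ∈ Good, P(x)/Q(x) ≤ 2^{(c+1)/δ} (equivalently P(x) ≤ 2^{(c+1)/δ}·Q(x)). -/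
/-- `t * log t ≥ -log 2` for `t ≥ 0`. -/
lemma aux_mul_log_ge (t : ℝ) (ht : 0 ≤ t) : -Real.log 2 ≤ t * Real.log t := by
  rcases eq_or_lt_of_le ht with h | h
  · simp [← h]
    positivity
  · have he : (0:ℝ) < Real.exp 1 := Real.exp_pos 1
    have hln : Real.log (1/t) ≤ (1/t) / Real.exp 1 := by
      have := Real.add_one_le_exp (Real.log (1/t) - 1)
      have h2 : Real.exp (Real.log (1/t) - 1) = (1/t) / Real.exp 1 := by
        rw [Real.exp_sub, Real.exp_log (by positivity)]
      linarith [h2 ▸ this]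
    have hlog : Real.log (1/t) = -Real.log t := by
      rw [one_div, Real.log_inv]
    have h3 : -Real.log t ≤ 1 / (t * Real.exp 1) := by
      rw [← hlog]; calc Real.log (1/t) ≤ (1/t)/Real.exp 1 := hln
        _ = 1 / (t * Real.exp 1) := by field_simp
    have h4 : -(1/Real.exp 1) ≤ t * Real.log t := by
      have := mul_le_mul_of_nonneg_left h3 ht
      have h5 : t * (1 / (t * Real.exp 1)) = 1 / Real.exp 1 := by
        field_simp
      nlinarith
    have h6 : 1 / Real.exp 1 ≤ Real.log 2 := by
      have h7 := Real.exp_one_gt_d9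
      have h8 := Real.log_two_gt_d9
      rw [div_le_iff₀ he]
      nlinarith
    linarith

/-- Each KL term is at least `-Q x`. -/
lemma aux_term_ge {P Q : ℝ} (hP : 0 ≤ P) (hQ : 0 < Q) :
    -Q ≤ P * Real.logb 2 (P / Q) := by
  have hlog2 : (0:ℝ) < Real.log 2 := Real.log_pos (by norm_num)
  have ht : 0 ≤ P / Q := by positivity
  have haux := aux_mul_log_ge (P/Q) ht
  have key : -Q * Real.log 2 ≤ P * Real.log (P / Q) := by
    have := mul_le_mul_of_nonneg_left haux hQ.le
    have h2 : Q * (P / Q * Real.log (P / Q)) = P * Real.log (P/Q) := by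
      field_simp
    nlinarith
  have e1 : -Q = (-Q * Real.log 2) / Real.log 2 := by field_simp
  have e2 : P * Real.logb 2 (P/Q) = (P * Real.log (P/Q)) / Real.log 2 := by
    rw [Real.logb]; ring
  rw [e1, e2]
  gcongr

/-- Gibbs: each term is at least `(P - Q)/log 2` in logb form; we use the sum. -/
lemma aux_gibbs {X : Type*} [Fintype X] (P Q : X → ℝ)
    (hP0 : ∀ x, 0 ≤ P x) (hP1 : ∑ x, P x = 1)
    (hQ0 : ∀ x, 0 < Q x) (hQ1 : ∑ x, Q x = 1) :
    0 ≤ ∑ x, P x * Real.logb 2 (P x / Q x) := by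
  have hlog2 : (0:ℝ) < Real.log 2 := Real.log_pos (by norm_num)
  have key : ∀ x, P x - Q x ≤ P x * Real.log (P x / Q x) := by
    intro x
    rcases eq_or_lt_of_le (hP0 x) with h | h
    · simp [← h]; linarith [(hQ0 x)]
    · have h1 : Real.log (Q x / P x) ≤ Q x / P x - 1 :=
        Real.log_le_sub_one_of_pos (div_pos (hQ0 x) h)
      have h2 : Real.log (P x / Q x) = -Real.log (Q x / P x) := by
        rw [← Real.log_inv, inv_div]
      have h3 : P x * (Q x / P x - 1) = Q x - P x := by field_simp
      nlinarith [mul_le_mul_of_nonneg_left h1 h.le]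
  have hsum : 0 ≤ ∑ x, P x * Real.log (P x / Q x) := by
    have h := Finset.sum_le_sum (s := Finset.univ) (fun x _ => key x)
    rw [Finset.sum_sub_distrib, hP1, hQ1] at h
    linarith
  have : ∑ x, P x * Real.logb 2 (P x / Q x)
      = (∑ x, P x * Real.log (P x / Q x)) / Real.log 2 := by
    rw [Finset.sum_div]
    congr 1; ext x; rw [Real.logb]; ring
  rw [this]
  positivity

/-- If `S(P‖Q) ≤ c` then there is a set `Good` of `P`-probability at
least `1 − δ` on which `P(x) ≤ 2^{(c+1)/δ}·Q(x)`. -/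
theorem stmt_3 {X : Type*} [Fintype X] (δ c : ℝ) (hδ : 0 < δ)
    (P Q : X → ℝ)
    (hP0 : ∀ x, 0 ≤ P x) (hP1 : ∑ x, P x = 1)
    (hQ0 : ∀ x, 0 < Q x) (hQ1 : ∑ x, Q x = 1)
    (hc : ∑ x, P x * Real.logb 2 (P x / Q x) ≤ c) :
    ∃ Good : Finset X, 1 - δ ≤ ∑ x ∈ Good, P x ∧
      ∀ x ∈ Good, P x ≤ (2 : ℝ) ^ ((c + 1) / δ) * Q x := by
  have hc0 : 0 ≤ c := le_trans (aux_gibbs P Q hP0 hP1 hQ0 hQ1) hc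
  set M : ℝ := (2 : ℝ) ^ ((c + 1) / δ) with hM
  refine ⟨Finset.univ.filter (fun x => P x ≤ M * Q x), ?_,
    fun x hx => (Finset.mem_filter.mp hx).2⟩
  set G := Finset.univ.filter (fun x => P x ≤ M * Q x)
  set B := Finset.univ.filter (fun x => ¬ P x ≤ M * Q x)
  have hsplit : ∀ f : X → ℝ, ∑ x ∈ G, f x + ∑ x ∈ B, f x = ∑ x, f x := by
    intro f; exact Finset.sum_filter_add_sum_filter_not _ _ f
  -- lower bound on good terms
  have hgood : -1 ≤ ∑ x ∈ G, P x * Real.logb 2 (P x / Q x) := by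
    have h1 : ∑ x ∈ G, (-Q x) ≤ ∑ x ∈ G, P x * Real.logb 2 (P x / Q x) :=
      Finset.sum_le_sum (fun x _ => aux_term_ge (hP0 x) (hQ0 x))
    have h2 : ∑ x ∈ G, Q x ≤ 1 := by
      rw [← hQ1]
      exact Finset.sum_le_sum_of_subset_of_nonneg (Finset.filter_subset _ _)
        (fun x _ _ => (hQ0 x).le)
    rw [Finset.sum_neg_distrib] at h1
    linarith
  -- lower bound on bad terms
  have hratio : 0 ≤ (c + 1) / δ := by positivity
  have hbad : ((c + 1) / δ) * ∑ x ∈ B, P x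
      ≤ ∑ x ∈ B, P x * Real.logb 2 (P x / Q x) := by
    rw [Finset.mul_sum]
    apply Finset.sum_le_sum
    intro x hx
    have hx' : M * Q x < P x := by
      have := (Finset.mem_filter.mp hx).2; push_neg at this; exact this
    have hMpos : 0 < M := Real.rpow_pos_of_pos (by norm_num) _
    have hPx : 0 < P x := lt_trans (mul_pos hMpos (hQ0 x)) hx'
    have hlb : (c + 1) / δ ≤ Real.logb 2 (P x / Q x) := by
      have h1 : M ≤ P x / Q x := by
        rw [le_div_iff₀ (hQ0 x)]; nlinarith
      calc (c + 1) / δ = Real.logb 2 M := (Real.logb_rpow (by norm_num) (by norm_num)).symm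
        _ ≤ Real.logb 2 (P x / Q x) :=
          Real.logb_le_logb_of_le (by norm_num) hMpos h1
    calc ((c+1)/δ) * P x = P x * ((c+1)/δ) := by ring
      _ ≤ P x * Real.logb 2 (P x / Q x) :=
        mul_le_mul_of_nonneg_left hlb hPx.le
  have htotal := hsplit (fun x => P x * Real.logb 2 (P x / Q x))
  have hBle : ∑ x ∈ B, P x ≤ δ := by
    have h1 : ((c+1)/δ) * ∑ x ∈ B, P x ≤ c + 1 := by
      have := htotal ▸ hc
      linarith
    have h2 : ((c+1)/δ) * δ = c + 1 := by field_simp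
    have hpos : 0 < (c+1)/δ := by positivity
    nlinarith
  have hPsplit := hsplit P
  rw [hP1] at hPsplit
  linarith
end

section
/- Let ρ and σ be density matrices of size n×n over ℂ, and let A be an n×n complex matrix with A†A ⪯ I (i.e., I − A†A is positive semidefinite), modeling a boolean-valued measurement that succeeds with Kraus operator A. Let p = Tr(A ρ A†) and q = Tr(A σ A†) (both real and nonnegative), and assume p > 0 and q > 0. Let ρ' = A ρ A† / p and σ' = A σ A† / q be the post-measurement states upon success. Then ‖ρ' − σ'‖₁ ≤ ‖ρ − σ‖₁ / max{p, q}. -/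
open Matrix
open scoped ComplexOrder

/-- The trace norm of a matrix: `‖A‖₁ = Tr √(AᴴA)`; for Hermitian `A` this equals
the sum of the absolute values of the eigenvalues of `A`. -/
noncomputable def traceNorm {n : Type*} [Fintype n] [DecidableEq n]
    (A : Matrix n n ℂ) : ℝ :=
  ((Matrix.posSemidef_conjTranspose_mul_self A).1.eigenvectorUnitary.1 *
    diagonal (((↑) : ℝ → ℂ) ∘ (√·) ∘ (Matrix.posSemidef_conjTranspose_mul_self A).1.eigenvalues) *
    (star (Matrix.posSemidef_conjTranspose_mul_self A).1.eigenvectorUnitary : Matrix n n ℂ)).trace.re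

section Helper
variable {m : Type*} [Fintype m] [DecidableEq m]

lemma sqrt_congr {A B : Matrix m m ℂ} (hA : A.PosSemidef) (hB : B.PosSemidef)
    (h : A = B) : (hA.1.eigenvectorUnitary.1 *
    diagonal (((↑) : ℝ → ℂ) ∘ (√·) ∘ hA.1.eigenvalues) *
    (star hA.1.eigenvectorUnitary : Matrix m m ℂ)) = (hB.1.eigenvectorUnitary.1 *
    diagonal (((↑) : ℝ → ℂ) ∘ (√·) ∘ hB.1.eigenvalues) *
    (star hB.1.eigenvectorUnitary : Matrix m m ℂ)) := by subst h; rfl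

lemma traceNorm_neg (X : Matrix m m ℂ) : traceNorm (-X) = traceNorm X := by
  unfold traceNorm
  rw [sqrt_congr (posSemidef_conjTranspose_mul_self (-X))
    (posSemidef_conjTranspose_mul_self X) (by simp)]

lemma unitary_conj_mul {U C D : Matrix m m ℂ} (hU : (star U) * U = 1) :
    (U * C * star U) * (U * D * star U) = U * (C * D) * star U := by
  have : U * C * star U * (U * D * star U) = U * C * ((star U * U) * D) * star U := by
    noncomm_ring
  rw [this, hU, one_mul]; noncomm_ring

lemma trace_unitary_conj {U C : Matrix m m ℂ} (hU : (star U) * U = 1) :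
    (U * C * star U).trace = C.trace := by
  rw [trace_mul_comm, ← mul_assoc, hU, one_mul]

lemma diag_re_nonneg {M : Matrix m m ℂ} (hM : M.PosSemidef) (i : m) : 0 ≤ (M i i).re := by
  have := hM.dotProduct_mulVec_nonneg (Pi.single i 1)
  simp [dotProduct, Pi.single_apply, mulVec, Finset.sum_ite_eq] at this
  exact_mod_cast (Complex.le_def.mp this).1

lemma traceNorm_eq_sum_abs {X : Matrix m m ℂ} (hX : X.IsHermitian) :
    traceNorm X = ∑ i, |hX.eigenvalues i| := by
  set U : Matrix m m ℂ := (hX.eigenvectorUnitary : Matrix m m ℂ) with hUdef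
  have hUU : (star U) * U = 1 := (Unitary.mem_iff.mp hX.eigenvectorUnitary.2).1
  set D : Matrix m m ℂ := diagonal (RCLike.ofReal ∘ hX.eigenvalues) with hDdef
  set E : Matrix m m ℂ := diagonal (RCLike.ofReal ∘ fun i => |hX.eigenvalues i|) with hEdef
  have hspec : X = U * D * star U := hX.spectral_theorem
  have hEpsd : (U * E * star U).PosSemidef := by
    refine PosSemidef.mul_mul_conjTranspose_same ?_ U
    refine PosSemidef.diagonal fun i => ?_
    exact RCLike.ofReal_nonneg.mpr (abs_nonneg _)
  have hsq : (U * E * star U) ^ 2 = Xᴴ * X := by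
    have hED : E * E = D * D := by
      rw [hEdef, hDdef, diagonal_mul_diagonal, diagonal_mul_diagonal]
      refine congrArg diagonal (funext fun i => ?_)
      simp only [Function.comp_apply]
      rw [← RCLike.ofReal_mul, ← RCLike.ofReal_mul, abs_mul_abs_self]
    rw [pow_two, unitary_conj_mul hUU, hX.eq, hspec, unitary_conj_mul hUU, hED]
  have hsqrt : (U * E * star U) = ((posSemidef_conjTranspose_mul_self X).1.eigenvectorUnitary.1 *
      diagonal (((↑) : ℝ → ℂ) ∘ (√·) ∘ (posSemidef_conjTranspose_mul_self X).1.eigenvalues) *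
      (star (posSemidef_conjTranspose_mul_self X).1.eigenvectorUnitary : Matrix m m ℂ)) := by
    have e1 := (posSemidef_conjTranspose_mul_self X).1.cfc_eq Real.sqrt
    have e2 := hX.cfc_eq (fun x => |x|)
    have hXs : IsSelfAdjoint X := hX
    have e3 : Xᴴ * X = cfc (fun x : ℝ => x ^ 2) X := by
      rw [cfc_pow_id X 2 hXs, sq, hX.eq]
    have e4 : cfc Real.sqrt (Xᴴ * X) = cfc (fun x : ℝ => |x|) X := by
      rw [e3, ← cfc_comp Real.sqrt (fun x : ℝ => x ^ 2) X hXs]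
      exact cfc_congr fun x _ => Real.sqrt_sq_eq_abs x
    simp only [IsHermitian.cfc, Unitary.conjStarAlgAut_apply] at e1 e2
    refine Eq.trans ?_ (e4.symm.trans e1)
    rw [e2, hUdef, hEdef]
    rfl
  unfold traceNorm
  rw [← hsqrt, trace_unitary_conj hUU, hEdef, trace_diagonal]
  simp only [Function.comp_apply]
  rw [← RCLike.ofReal_sum]
  exact Complex.ofReal_re _

lemma trace_mul_le {K Q : Matrix m m ℂ} (hK : K.IsHermitian) (hQ : Q.PosSemidef)
    (hQ1 : (1 - Q).PosSemidef) :
    (Q * K).trace.re ≤ (traceNorm K + K.trace.re) / 2 := by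
  set U : Matrix m m ℂ := (hK.eigenvectorUnitary : Matrix m m ℂ) with hUdef
  have hUU : (star U) * U = 1 := (Unitary.mem_iff.mp hK.eigenvectorUnitary.2).1
  have hUU' : U * star U = 1 := (Unitary.mem_iff.mp hK.eigenvectorUnitary.2).2
  set lam := hK.eigenvalues with hlam
  set D : Matrix m m ℂ := diagonal (RCLike.ofReal ∘ lam) with hDdef
  have hspec : K = U * D * star U := hK.spectral_theorem
  set R : Matrix m m ℂ := (star U) * Q * U with hRdef
  have hR : R.PosSemidef := by
    have h := hQ.mul_mul_conjTranspose_same (star U)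
    rwa [Matrix.star_eq_conjTranspose, conjTranspose_conjTranspose] at h
  have hR1 : (1 - R).PosSemidef := by
    have h := hQ1.mul_mul_conjTranspose_same (star U)
    rw [Matrix.star_eq_conjTranspose, conjTranspose_conjTranspose] at h
    have e : star U * (1 - Q) * U = 1 - R := by
      rw [mul_sub, sub_mul, mul_one, hUU, hRdef]
    rw [Matrix.star_eq_conjTranspose] at e
    rwa [e] at h
  have htr : (Q * K).trace = (R * D).trace := by
    rw [hspec]
    have e1 : Q * (U * D * star U) = (Q * U * D) * star U := by noncomm_ring
    rw [e1, trace_mul_comm]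
    congr 1
    rw [hRdef]; noncomm_ring
  have h2 : (R * D).trace = ∑ i, R i i * ((lam i : ℝ) : ℂ) := by
    simp [Matrix.trace, Matrix.diag, hDdef, Matrix.mul_diagonal]
  have h2re : (Q * K).trace.re = ∑ i, (R i i).re * lam i := by
    rw [htr, h2, Complex.re_sum]
    congr 1; funext i
    simp [Complex.mul_re]
  have hKtr : K.trace.re = ∑ i, lam i := by
    rw [hspec, trace_unitary_conj hUU, hDdef, trace_diagonal, Complex.re_sum]
    simp
  rw [h2re, hKtr, traceNorm_eq_sum_abs hK, ← hlam, ← Finset.sum_add_distrib, Finset.sum_div]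
  refine Finset.sum_le_sum fun i _ => ?_
  have hc0 : 0 ≤ (R i i).re := diag_re_nonneg hR i
  have hc1 : (R i i).re ≤ 1 := by
    have h := diag_re_nonneg hR1 i
    simp only [Matrix.sub_apply, Matrix.one_apply_eq, Complex.sub_re, Complex.one_re] at h
    linarith
  rcases abs_cases (lam i) with ⟨he, hx⟩ | ⟨he, hx⟩
  · rw [he]
    calc (R i i).re * lam i ≤ 1 * lam i := by nlinarith
    _ = (lam i + lam i) / 2 := by ring
  · rw [he]
    have : (R i i).re * lam i ≤ 0 := mul_nonpos_of_nonneg_of_nonpos hc0 hx.le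
    calc (R i i).re * lam i ≤ 0 := this
    _ = (-lam i + lam i) / 2 := by ring

lemma exists_opt {K : Matrix m m ℂ} (hK : K.IsHermitian) :
    ∃ Q : Matrix m m ℂ, Q.PosSemidef ∧ (1 - Q).PosSemidef ∧
      traceNorm K = 2 * (Q * K).trace.re - K.trace.re := by
  classical
  set U : Matrix m m ℂ := (hK.eigenvectorUnitary : Matrix m m ℂ) with hUdef
  have hUU : (star U) * U = 1 := (Unitary.mem_iff.mp hK.eigenvectorUnitary.2).1
  have hUU' : U * star U = 1 := (Unitary.mem_iff.mp hK.eigenvectorUnitary.2).2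
  set lam := hK.eigenvalues with hlam
  set D : Matrix m m ℂ := diagonal (RCLike.ofReal ∘ lam) with hDdef
  have hspec : K = U * D * star U := hK.spectral_theorem
  set c : m → ℝ := fun i => if 0 ≤ lam i then 1 else 0 with hcdef
  set C : Matrix m m ℂ := diagonal (RCLike.ofReal ∘ c) with hCdef
  refine ⟨U * C * star U, ?_, ?_, ?_⟩
  · refine PosSemidef.mul_mul_conjTranspose_same ?_ U
    refine PosSemidef.diagonal fun i => ?_
    simp only [Function.comp_apply, hcdef]
    split <;> simp
  · have e : (1 : Matrix m m ℂ) - U * C * star U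
        = U * (diagonal (RCLike.ofReal ∘ fun i => 1 - c i)) * star U := by
      have : diagonal (RCLike.ofReal ∘ fun i => 1 - c i) = 1 - C := by
        rw [hCdef, ← diagonal_one]
        rw [diagonal_sub]
        refine congrArg diagonal (funext fun i => ?_)
        simp
      rw [this, mul_sub, sub_mul, mul_one, hUU']
    rw [e]
    refine PosSemidef.mul_mul_conjTranspose_same ?_ U
    refine PosSemidef.diagonal fun i => ?_
    simp only [Function.comp_apply, hcdef]
    split <;> simp
  · have htr : (U * C * star U * K).trace = ∑ i, ((c i * lam i : ℝ) : ℂ) := by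
      rw [hspec]
      have e1 : U * C * star U * (U * D * star U) = U * (C * D) * star U :=
        unitary_conj_mul hUU
      rw [e1, trace_unitary_conj hUU, hCdef, hDdef, diagonal_mul_diagonal, trace_diagonal]
      congr 1; funext i
      simp
    rw [traceNorm_eq_sum_abs hK, htr, ← hlam]
    have hKtr : K.trace.re = ∑ i, lam i := by
      rw [hspec, trace_unitary_conj hUU, hDdef, trace_diagonal, Complex.re_sum]
      simp
    rw [hKtr, ← Complex.ofReal_sum, Complex.ofReal_re, Finset.mul_sum, ← Finset.sum_sub_distrib]
    refine Finset.sum_congr rfl fun i _ => ?_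
    rw [hcdef]
    rcases le_or_gt 0 (lam i) with h | h
    · rw [abs_of_nonneg h]; simp only [if_pos h]; ring
    · rw [abs_of_neg h]; simp only [if_neg (not_le.mpr h), zero_mul]; ring

lemma trace_re_nonneg {M : Matrix m m ℂ} (hM : M.PosSemidef) : 0 ≤ M.trace.re := by
  rw [Matrix.trace, Complex.re_sum]
  exact Finset.sum_nonneg fun i _ => diag_re_nonneg hM i

open scoped MatrixOrder in
lemma trace_mul_psd_re_nonneg {Q S : Matrix m m ℂ} (hQ : Q.PosSemidef) (hS : S.PosSemidef) :
    0 ≤ (Q * S).trace.re := by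
  obtain ⟨B, hB⟩ := CStarAlgebra.nonneg_iff_eq_star_mul_self.mp hQ.nonneg
  have e : Q * S = Bᴴ * (B * S) := by rw [hB, mul_assoc, Matrix.star_eq_conjTranspose]
  rw [e, trace_mul_comm]
  have : (B * S) * Bᴴ = B * S * Bᴴ := by rw [mul_assoc]
  rw [this]
  exact trace_re_nonneg (hS.mul_mul_conjTranspose_same B)

lemma smul_real_isHermitian {M : Matrix m m ℂ} (hM : M.IsHermitian) (r : ℝ) :
    ((r : ℂ) • M).IsHermitian := by
  unfold Matrix.IsHermitian
  rw [conjTranspose_smul, hM.eq]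
  congr 1
  simp

lemma key {ρ σ A : Matrix m m ℂ} (hρ : ρ.PosSemidef) (hρt : ρ.trace = 1)
    (hσ : σ.PosSemidef) (hσt : σ.trace = 1) (hA : (1 - Aᴴ * A).PosSemidef)
    (p q : ℝ) (hp : (p:ℂ) = (A * ρ * Aᴴ).trace) (hq : (q:ℂ) = (A * σ * Aᴴ).trace)
    (hp0 : 0 < p) (hq0 : 0 < q) (hqp : q ≤ p) :
    traceNorm ((p:ℂ)⁻¹ • (A * ρ * Aᴴ) - (q:ℂ)⁻¹ • (A * σ * Aᴴ)) ≤ traceNorm (ρ - σ) / p := by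
  set S₁ := A * ρ * Aᴴ with hS₁def
  set S₂ := A * σ * Aᴴ with hS₂def
  have hS₁ : S₁.PosSemidef := hρ.mul_mul_conjTranspose_same A
  have hS₂ : S₂.PosSemidef := hσ.mul_mul_conjTranspose_same A
  set M := (p:ℂ)⁻¹ • S₁ - (q:ℂ)⁻¹ • S₂ with hMdef
  have hpC : (p : ℂ) ≠ 0 := Complex.ofReal_ne_zero.mpr hp0.ne'
  have hqC : (q : ℂ) ≠ 0 := Complex.ofReal_ne_zero.mpr hq0.ne'
  have hM : M.IsHermitian := by
    have h1 := smul_real_isHermitian hS₁.1 p⁻¹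
    have h2 := smul_real_isHermitian hS₂.1 q⁻¹
    rw [Complex.ofReal_inv] at h1 h2
    exact h1.sub h2
  have htrM0 : M.trace = 0 := by
    rw [hMdef, trace_sub, trace_smul, trace_smul, ← hp, ← hq, smul_eq_mul, smul_eq_mul,
      inv_mul_cancel₀ hpC, inv_mul_cancel₀ hqC, sub_self]
  obtain ⟨Q, hQ, hQ1, hopt⟩ := exists_opt hM
  rw [htrM0] at hopt
  simp only [Complex.zero_re, sub_zero] at hopt
  have hre : ∀ (r : ℝ) (Z : Matrix m m ℂ), (((r:ℂ)) • Z).trace.re = r * Z.trace.re := by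
    intro r Z
    rw [trace_smul, smul_eq_mul]
    simp [Complex.mul_re]
  have e : Q * M = (p:ℂ)⁻¹ • (Q * S₁) - (q:ℂ)⁻¹ • (Q * S₂) := by
    rw [hMdef, mul_sub, mul_smul_comm, mul_smul_comm]
  set t₁ := (Q * S₁).trace.re
  set t₂ := (Q * S₂).trace.re
  have ht₂ : 0 ≤ t₂ := trace_mul_psd_re_nonneg hQ hS₂
  have step1 : (Q * M).trace.re = p⁻¹ * t₁ - q⁻¹ * t₂ := by
    rw [e, trace_sub, Complex.sub_re, ← Complex.ofReal_inv, ← Complex.ofReal_inv, hre, hre]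
  have hinv : p⁻¹ ≤ q⁻¹ := by
    apply inv_anti₀ hq0 hqp
  have step2 : (Q * M).trace.re ≤ p⁻¹ * (t₁ - t₂) := by
    rw [step1]
    nlinarith
  have step4 : S₁ - S₂ = A * (ρ - σ) * Aᴴ := by
    rw [hS₁def, hS₂def]; noncomm_ring
  have step3 : t₁ - t₂ = ((Aᴴ * Q * A) * (ρ - σ)).trace.re := by
    have e1 : Q * (A * (ρ - σ) * Aᴴ) = (Q * A * (ρ - σ)) * Aᴴ := by noncomm_ring
    have e2 : (Q * (A * (ρ - σ) * Aᴴ)).trace = ((Aᴴ * Q * A) * (ρ - σ)).trace := by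
      rw [e1, trace_mul_comm]
      congr 1
      noncomm_ring
    have e3 : Q * S₁ - Q * S₂ = Q * (A * (ρ - σ) * Aᴴ) := by rw [← mul_sub, step4]
    have e4 : t₁ - t₂ = (Q * S₁ - Q * S₂).trace.re := by
      rw [trace_sub, Complex.sub_re]
    rw [e4, e3, e2]
  have hQ' : (Aᴴ * Q * A).PosSemidef := hQ.conjTranspose_mul_mul_same A
  have hQ'1 : ((1 : Matrix m m ℂ) - Aᴴ * Q * A).PosSemidef := by
    have e5 : (1 : Matrix m m ℂ) - Aᴴ * Q * A = (1 - Aᴴ * A) + Aᴴ * (1 - Q) * A := by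
      noncomm_ring
    rw [e5]
    exact hA.add (hQ1.conjTranspose_mul_mul_same A)
  have htrρσ : (ρ - σ).trace.re = 0 := by
    rw [trace_sub, hρt, hσt, sub_self, Complex.zero_re]
  have step6 : ((Aᴴ * Q * A) * (ρ - σ)).trace.re ≤ traceNorm (ρ - σ) / 2 := by
    have := trace_mul_le (hρ.1.sub hσ.1) hQ' hQ'1
    rwa [htrρσ, add_zero] at this
  have hpinv : (0:ℝ) ≤ p⁻¹ := (inv_pos.mpr hp0).le
  calc traceNorm M = 2 * (Q * M).trace.re := hopt
    _ ≤ 2 * (p⁻¹ * (t₁ - t₂)) := by linarith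
    _ = 2 * p⁻¹ * (((Aᴴ * Q * A) * (ρ - σ)).trace.re) := by rw [step3]; ring
    _ ≤ 2 * p⁻¹ * (traceNorm (ρ - σ) / 2) := by
        apply mul_le_mul_of_nonneg_left step6 (by linarith)
    _ = traceNorm (ρ - σ) / p := by field_simp

end Helper

/-- If a boolean measurement with Kraus operator `A` (`AᴴA ⪯ I`) succeeds
on density matrices `ρ`, `σ` with probabilities `p, q > 0`, then the post-measurement
states satisfy `‖ρ' − σ'‖₁ ≤ ‖ρ − σ‖₁ / max p q`. -/


theorem stmt_5 {n : ℕ} (ρ σ A : Matrix (Fin n) (Fin n) ℂ)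
    (hρ : ρ.PosSemidef) (hρt : ρ.trace = 1)
    (hσ : σ.PosSemidef) (hσt : σ.trace = 1)
    (hA : (1 - Aᴴ * A).PosSemidef)
    (p q : ℝ)
    (hp : (p : ℂ) = (A * ρ * Aᴴ).trace) (hq : (q : ℂ) = (A * σ * Aᴴ).trace)
    (hp0 : 0 < p) (hq0 : 0 < q) :
    traceNorm (((p : ℂ))⁻¹ • (A * ρ * Aᴴ) - ((q : ℂ))⁻¹ • (A * σ * Aᴴ))
      ≤ traceNorm (ρ - σ) / max p q := by
  rcases le_total q p with hqp | hpq
  · rw [max_eq_left hqp]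
    exact key hρ hρt hσ hσt hA p q hp hq hp0 hq0 hqp
  · rw [max_eq_right hpq]
    have h1 : (p:ℂ)⁻¹ • (A * ρ * Aᴴ) - (q:ℂ)⁻¹ • (A * σ * Aᴴ)
        = -((q:ℂ)⁻¹ • (A * σ * Aᴴ) - (p:ℂ)⁻¹ • (A * ρ * Aᴴ)) := by rw [neg_sub]
    rw [h1, traceNorm_neg]
    have h2 := key hσ hσt hρ hρt hA q p hq hp hq0 hp0 hpq
    have h3 : traceNorm (σ - ρ) = traceNorm (ρ - σ) := by rw [← neg_sub, traceNorm_neg]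
    rwa [h3] at h2
end

section
/- Let ψ be an m×n complex matrix with Frobenius norm 1 (representing a bipartite pure quantum state via its coefficient matrix), let λ₁, …, λ_m be the eigenvalues of the positive semidefinite matrix ψψ† (the squared Schmidt coefficients, which are nonnegative and sum to 1), and let e = −∑ᵢ λᵢ·log₂ λᵢ be the amount of entanglement of ψ. Then there exists an m×n complex matrix ψ' with Frobenius norm 1 and rank(ψ') ≤ 2^{100·e} such that |⟨ψ, ψ'⟩_F|² ≥ 99/100, where ⟨·,·⟩_F is the Frobenius (Hilbert–Schmidt) inner product. (Consequently the pure states determined by ψ and ψ' are close in trace distance.) -/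
open Matrix

lemma aux_trace_inner {m n : ℕ} (A B : Matrix (Fin m) (Fin n) ℂ) :
    (Aᴴ * B).trace = ∑ i, ∑ j, (starRingEnd ℂ) (A i j) * B i j := by
  simp only [Matrix.trace, Matrix.diag, Matrix.mul_apply, Matrix.conjTranspose_apply]
  rw [Finset.sum_comm]; rfl

lemma aux_trace_norm {m n : ℕ} (A : Matrix (Fin m) (Fin n) ℂ) :
    (Aᴴ * A).trace = ((∑ i, ∑ j, ‖A i j‖ ^ 2 : ℝ) : ℂ) := by
  rw [aux_trace_inner]
  push_cast
  congr 1; ext i; congr 1; ext j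
  rw [RCLike.conj_mul]
  norm_num

/-- Any bipartite pure state `ψ` (coefficient matrix of Frobenius norm 1)
with entanglement `e` is `1/20`-close (fidelity `≥ 99/100`) to a pure state of Schmidt
rank at most `2^{100·e}`. -/
theorem stmt_8 {m n : ℕ} (ψ : Matrix (Fin m) (Fin n) ℂ)
    (hψ : ∑ i, ∑ j, ‖ψ i j‖ ^ 2 = 1)
    (e : ℝ)
    (he : e = -∑ i, (Matrix.isHermitian_mul_conjTranspose_self ψ).eigenvalues i *
        Real.logb 2 ((Matrix.isHermitian_mul_conjTranspose_self ψ).eigenvalues i)) :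
    ∃ ψ' : Matrix (Fin m) (Fin n) ℂ,
      (∑ i, ∑ j, ‖ψ' i j‖ ^ 2 = 1) ∧
      (ψ'.rank : ℝ) ≤ (2 : ℝ) ^ (100 * e) ∧
      (99 / 100 : ℝ) ≤ ‖∑ i, ∑ j, (starRingEnd ℂ) (ψ i j) * ψ' i j‖ ^ 2 := by
  classical
  set hH := Matrix.isHermitian_mul_conjTranspose_self ψ with hHdef
  set lam := hH.eigenvalues with hlamdef
  have hnn : ∀ i, 0 ≤ lam i := fun i =>
    Matrix.eigenvalues_self_mul_conjTranspose_nonneg ψ i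
  set U : Matrix (Fin m) (Fin m) ℂ := (hH.eigenvectorUnitary : Matrix (Fin m) (Fin m) ℂ) with hUdef
  have hUU : star U * U = 1 := Matrix.mem_unitaryGroup_iff'.mp hH.eigenvectorUnitary.2
  have hspec : ψ * ψᴴ = U * Matrix.diagonal (RCLike.ofReal ∘ lam) * star U :=
    hH.spectral_theorem
  -- sum of eigenvalues is 1
  have htrU : ∀ X : Matrix (Fin m) (Fin m) ℂ, (U * X * star U).trace = X.trace := by
    intro X
    rw [Matrix.trace_mul_cycle, hUU, Matrix.one_mul]
  have hsumC : ((∑ i, lam i : ℝ) : ℂ) = 1 := by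
    have h1 : (ψ * ψᴴ).trace = ((∑ i, ∑ j, ‖ψ i j‖ ^ 2 : ℝ) : ℂ) := by
      rw [Matrix.trace_mul_comm, aux_trace_norm]
    rw [hspec, htrU, Matrix.trace_diagonal] at h1
    rw [hψ] at h1
    push_cast at h1 ⊢
    simpa using h1
  have hsum : ∑ i, lam i = 1 := by exact_mod_cast hsumC
  have hle1 : ∀ i, lam i ≤ 1 := by
    intro i
    rw [← hsum]
    exact Finset.single_le_sum (fun j _ => hnn j) (Finset.mem_univ i)
  -- entropy terms are nonneg
  have hterm : ∀ i, 0 ≤ -(lam i * Real.logb 2 (lam i)) := by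
    intro i
    rcases eq_or_lt_of_le (hnn i) with h | h
    · simp [← h]
    · have := Real.logb_nonpos (b := 2) (by norm_num) (hnn i) (hle1 i)
      nlinarith
  have he0 : 0 ≤ e := by
    rw [he, ← Finset.sum_neg_distrib]
    exact Finset.sum_nonneg fun i _ => hterm i
  -- the threshold and the set of large eigenvalues
  set τ : ℝ := (2 : ℝ) ^ (-(100 * e)) with hτdef
  have hτpos : 0 < τ := Real.rpow_pos_of_pos (by norm_num) _
  set S : Finset (Fin m) := Finset.univ.filter (fun i => τ ≤ lam i) with hSdef
  set t := ∑ i ∈ S, lam i with htdef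
  -- Markov bound: the small eigenvalues have total mass ≤ 1/100
  have hsmall : ∑ i ∈ Sᶜ, lam i ≤ 1 / 100 := by
    have key : ∀ i ∈ Sᶜ, 100 * e * lam i ≤ -(lam i * Real.logb 2 (lam i)) ∧
        (e = 0 → lam i = 0) := by
      intro i hi
      have hlt : lam i < τ := by
        simp only [hSdef, Finset.mem_compl, Finset.mem_filter, Finset.mem_univ,
          true_and, not_le] at hi
        exact hi
      rcases eq_or_lt_of_le (hnn i) with h | h
      · constructor
        · simp [← h]
        · intro _; exact h.symm
      · have hlog : Real.logb 2 (lam i) < -(100 * e) := by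
          rw [Real.logb_lt_iff_lt_rpow (by norm_num) h]
          exact hlt
        constructor
        · nlinarith
        · intro he'
          exfalso
          have h1 : lam i < 1 := by
            have h1' := hlt
            rw [hτdef, he'] at h1'
            norm_num at h1'
            exact h1'
          have := Real.logb_neg (b := 2) (by norm_num) h h1
          have hterm' := hterm i
          have hsum0 : ∑ j, -(lam j * Real.logb 2 (lam j)) = 0 := by
            rw [Finset.sum_neg_distrib, ← he, he']
          have := (Finset.sum_eq_zero_iff_of_nonneg (fun j _ => hterm j)).mp hsum0 i
            (Finset.mem_univ i)
          nlinarith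
    rcases eq_or_lt_of_le he0 with he' | he'
    · have : ∀ i ∈ Sᶜ, lam i = 0 := fun i hi => (key i hi).2 he'.symm
      rw [Finset.sum_congr rfl this]
      simp
    · have h1 : 100 * e * ∑ i ∈ Sᶜ, lam i ≤ ∑ i ∈ Sᶜ, -(lam i * Real.logb 2 (lam i)) := by
        rw [Finset.mul_sum]
        exact Finset.sum_le_sum fun i hi => (key i hi).1
      have h2 : ∑ i ∈ Sᶜ, -(lam i * Real.logb 2 (lam i)) ≤ e := by
        rw [he, ← Finset.sum_neg_distrib]
        exact Finset.sum_le_sum_of_subset_of_nonneg (Finset.subset_univ _)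
          (fun i _ _ => hterm i)
      nlinarith
  have hts : t + ∑ i ∈ Sᶜ, lam i = 1 := by
    rw [htdef, Finset.sum_add_sum_compl, hsum]
  have ht99 : (99 / 100 : ℝ) ≤ t := by linarith
  have ht0 : 0 < t := by linarith
  -- cardinality bound
  have hcard : (S.card : ℝ) ≤ (2 : ℝ) ^ (100 * e) := by
    have h1 : (S.card : ℝ) * τ ≤ 1 := by
      calc (S.card : ℝ) * τ = ∑ _i ∈ S, τ := by rw [Finset.sum_const, nsmul_eq_mul]
        _ ≤ ∑ i ∈ S, lam i := Finset.sum_le_sum fun i hi => by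
            simp only [hSdef, Finset.mem_filter] at hi; exact hi.2
        _ ≤ ∑ i, lam i := Finset.sum_le_sum_of_subset_of_nonneg (Finset.subset_univ _)
            (fun i _ _ => hnn i)
        _ = 1 := hsum
    have h2 : τ = ((2:ℝ) ^ (100 * e))⁻¹ := by
      rw [hτdef, Real.rpow_neg (by norm_num)]
    rw [h2] at h1
    have h3 : (0:ℝ) < (2:ℝ) ^ (100 * e) := Real.rpow_pos_of_pos (by norm_num) _
    calc (S.card : ℝ) = (S.card : ℝ) * ((2:ℝ) ^ (100*e))⁻¹ * ((2:ℝ) ^ (100*e)) := by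
          rw [mul_assoc, inv_mul_cancel₀ h3.ne', mul_one]
      _ ≤ 1 * ((2:ℝ) ^ (100*e)) := by nlinarith
      _ = (2:ℝ) ^ (100*e) := one_mul _
  -- the projector
  set d : Fin m → ℂ := fun i => if i ∈ S then 1 else 0 with hddef
  set P : Matrix (Fin m) (Fin m) ℂ := U * Matrix.diagonal d * star U with hPdef
  have hdd : ∀ i, d i * d i = d i := by
    intro i; by_cases h : i ∈ S <;> simp [hddef, h]
  have hconj : ∀ X Y : Matrix (Fin m) (Fin m) ℂ,
      (U * X * star U) * (U * Y * star U) = U * (X * Y) * star U := by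
    intro X Y
    simp only [Matrix.mul_assoc]
    rw [← Matrix.mul_assoc (star U) U, hUU, Matrix.one_mul]
  have hPP : P * P = P := by
    have hfun : (fun i => d i * d i) = d := funext hdd
    rw [hPdef, hconj, Matrix.diagonal_mul_diagonal, hfun]
  have hPst : Pᴴ = P := by
    rw [hPdef, ← Matrix.star_eq_conjTranspose]
    simp only [StarMul.star_mul, star_star]
    have hd : star d = d := by
      funext i; by_cases h : i ∈ S <;> simp [hddef, h]
    have h1 : star (Matrix.diagonal d) = Matrix.diagonal d := by
      rw [Matrix.star_eq_conjTranspose, Matrix.diagonal_conjTranspose, hd]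
    rw [h1, Matrix.mul_assoc]
  -- the key trace computation
  have hkey : (P * (ψ * ψᴴ)).trace = (t : ℂ) := by
    rw [hspec, hPdef, hconj, htrU, Matrix.diagonal_mul_diagonal, Matrix.trace_diagonal]
    have hite : ∀ i, d i * (RCLike.ofReal ∘ lam) i = if i ∈ S then ((lam i : ℝ) : ℂ) else 0 := by
      intro i; by_cases h : i ∈ S <;> simp [hddef, h]
    simp only [hite]
    rw [Finset.sum_ite_mem, Finset.univ_inter, htdef]
    push_cast
    rfl
  set B : Matrix (Fin m) (Fin n) ℂ := P * ψ with hBdef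
  have h1 : (ψᴴ * B).trace = (t : ℂ) := by
    have hBP : ψᴴ * B = ψᴴ * P * ψ := (Matrix.mul_assoc ψᴴ P ψ).symm
    rw [hBP, Matrix.trace_mul_cycle, Matrix.trace_mul_comm]
    exact hkey
  have h2 : (Bᴴ * B).trace = (t : ℂ) := by
    have hB2 : Bᴴ * B = ψᴴ * B := by
      rw [hBdef, Matrix.conjTranspose_mul, hPst, Matrix.mul_assoc, ← Matrix.mul_assoc P,
        hPP]
    rw [hB2]
    exact h1
  -- the normalized truncated state
  set c : ℝ := (Real.sqrt t)⁻¹ with hcdef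
  have hst : Real.sqrt t * Real.sqrt t = t := Real.mul_self_sqrt ht0.le
  have hs0 : Real.sqrt t ≠ 0 := by positivity
  refine ⟨(c : ℂ) • B, ?_, ?_, ?_⟩
  · -- norm one
    have : ((∑ i, ∑ j, ‖((c:ℂ) • B) i j‖ ^ 2 : ℝ) : ℂ) = (((c:ℂ) • B)ᴴ * ((c:ℂ) • B)).trace :=
      (aux_trace_norm _).symm
    rw [Matrix.conjTranspose_smul, Matrix.smul_mul, Matrix.mul_smul, Matrix.trace_smul,
      Matrix.trace_smul, h2] at this
    rw [Complex.star_def, Complex.conj_ofReal, smul_eq_mul, smul_eq_mul] at this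
    have hreal : c * (c * t) = 1 := by
      rw [hcdef]
      field_simp
      rw [Real.sq_sqrt ht0.le]
    have hval : (c:ℂ) * ((c:ℂ) * (t:ℂ)) = 1 := by
      have := congrArg (fun x : ℝ => (x:ℂ)) hreal
      push_cast at this
      simpa using this
    rw [hval] at this
    exact_mod_cast this
  · -- rank bound
    refine le_trans ?_ hcard
    have hr1 : ((c:ℂ) • B).rank ≤ B.rank := by
      rw [Matrix.smul_eq_diagonal_mul]
      exact Matrix.rank_mul_le_right _ _
    have hr2 : B.rank ≤ (Matrix.diagonal d).rank := by
      calc B.rank ≤ P.rank := by rw [hBdef]; exact Matrix.rank_mul_le_left _ _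
        _ ≤ (U * Matrix.diagonal d).rank := by rw [hPdef]; exact Matrix.rank_mul_le_left _ _
        _ ≤ (Matrix.diagonal d).rank := Matrix.rank_mul_le_right _ _
    have hr3 : (Matrix.diagonal d).rank = S.card := by
      rw [Matrix.rank_diagonal]
      rw [Fintype.card_subtype]
      congr 1
      ext i
      by_cases h : i ∈ S <;> simp [hddef, h]
    exact Nat.cast_le.mpr (le_trans hr1 (le_trans hr2 (le_of_eq hr3)))
  · -- fidelity
    have hip : ∑ i, ∑ j, (starRingEnd ℂ) (ψ i j) * ((c:ℂ) • B) i j = (c:ℂ) * (t:ℂ) := by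
      rw [← aux_trace_inner, Matrix.mul_smul, Matrix.trace_smul, h1, smul_eq_mul]
    rw [hip]
    have hreal2 : c * t = Real.sqrt t := by
      rw [hcdef]
      field_simp
      rw [Real.sq_sqrt ht0.le]
    have : (c:ℂ) * (t:ℂ) = ((Real.sqrt t : ℝ) : ℂ) := by
      rw [← hreal2]
      push_cast
      ring
    rw [this, Complex.norm_real, Real.norm_eq_abs, abs_of_nonneg (Real.sqrt_nonneg t),
      Real.sq_sqrt ht0.le]
    exact ht99
end
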